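/- There is an absolute constant c such that for all integers 0 ≤ k < l, every x ∈ I_{l+1}(e_k + e_l), and every A ∈ ℕ with A ≤ l, the Fejér kernel satisfies |K_{2^A}(x)| ≤ c·2^k; moreover K_{2^A}(x) = 0 whenever A > l. -/

import Mathlib

open MeasureTheory Filter Finset
open scoped ENNReal NNReal

noncomputable section

/-- The dyadic group `G = ∏ Z₂`. -/
abbrev G : Type := ℕ → ZMod 2

instance : TopologicalSpace (ZMod 2) := ⊥
instance : DiscreteTopology (ZMod 2) := ⟨rfl⟩
instance : MeasurableSpace (ZMod 2) := ⊤
instance : BorelSpace (ZMod 2) := ⟨borel_eq_top_of_discrete.symm⟩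
instance : ContinuousAdd (ZMod 2) := ⟨continuous_of_discreteTopology⟩
instance : ContinuousNeg (ZMod 2) := ⟨continuous_of_discreteTopology⟩
instance : IsTopologicalAddGroup (ZMod 2) := ⟨⟩

/-- The normalized Haar measure `μ` on the dyadic group `G`. -/
def μG : Measure G := Measure.addHaarMeasure ⊤

/-- The Rademacher functions `r_k(x) = (-1)^{x_k}`. -/
def rad (k : ℕ) (x : G) : ℝ := (-1 : ℝ) ^ (x k).val

/-- The Walsh functions `w_n = ∏_k r_k^{n_k}`, where `n = ∑ n_k 2^k`. -/
def walsh (n : ℕ) (x : G) : ℝ := ∏ k ∈ Finset.range n, rad k x ^ (Nat.testBit n k).toNat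

/-- The Dirichlet kernels `D_n = ∑_{k=0}^{n-1} w_k`. -/
def dirichlet (n : ℕ) (x : G) : ℝ := ∑ k ∈ Finset.range n, walsh k x

/-- The Fejér kernels `K_n = (1/n) ∑_{k=1}^{n} D_k`. -/
def fejer (n : ℕ) (x : G) : ℝ := (n : ℝ)⁻¹ * ∑ k ∈ Finset.Icc 1 n, dirichlet k x

/-- The Cesàro numbers `A_n^α = ((α+1)⋯(α+n))/n!`. -/
def cesA (α : ℝ) (n : ℕ) : ℝ := (∏ i ∈ Finset.range n, (α + i + 1)) / n.factorial

/-- The `(C,α)` kernels `K_n^α = (1/A_n^α) ∑_{k=1}^n A_{n-k}^{α-1} D_k`. -/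
def cesKernel (α : ℝ) (n : ℕ) (x : G) : ℝ :=
  (cesA α n)⁻¹ * ∑ k ∈ Finset.Icc 1 n, cesA (α - 1) (n - k) * dirichlet k x

/-- Walsh–Fourier coefficients of an integrable function. -/
def walshCoeff (f : G → ℝ) (k : ℕ) : ℝ := ∫ x, f x * walsh k x ∂μG

/-- Partial sums `S_m f` of the Walsh–Fourier series. -/
def partialSum (f : G → ℝ) (m : ℕ) (x : G) : ℝ :=
  ∑ k ∈ Finset.range m, walshCoeff f k * walsh k x

/-- The `(C,α)` means `σ_n^α f = (1/A_n^α) ∑_{k=1}^n A_{n-k}^{α-1} S_k f`. -/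
def cesaroMean (α : ℝ) (f : G → ℝ) (n : ℕ) (x : G) : ℝ :=
  (cesA α n)⁻¹ * ∑ k ∈ Finset.Icc 1 n, cesA (α - 1) (n - k) * partialSum f k x

/-- The dyadic interval `I_n(x)`. -/
def dyadicI (n : ℕ) (x : G) : Set G := {y | ∀ i < n, y i = x i}

/-- `e_k ∈ G`: the element whose `k`-th coordinate is `1` and all others `0`. -/
def eG (k : ℕ) : G := fun i => if i = k then 1 else 0

/-- The projection onto the first `n` coordinates. -/
def projG (n : ℕ) : G → (Fin n → ZMod 2) := fun x i => x i

/-- The dyadic filtration `ℱ_n`, generated by the dyadic intervals of length `n`. -/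
def dyadicF : Filtration ℕ (inferInstance : MeasurableSpace G) where
  seq n := MeasurableSpace.comap (projG n) inferInstance
  mono' := by
    intro n m hnm
    have h : projG n = (fun (y : Fin m → ZMod 2) (i : Fin n) => y (Fin.castLE hnm i)) ∘ projG m :=
      rfl
    simp only []
    rw [h, ← MeasurableSpace.comap_comp]
    exact MeasurableSpace.comap_mono
      ((measurable_pi_lambda _ fun i => measurable_pi_apply _).comap_le)
  le' := fun n => (measurable_pi_lambda _ fun i => measurable_pi_apply _).comap_le

/-- The Walsh–Fourier coefficients `F̂(k) = lim_n ∫ F_n w_k dμ` of a martingale. -/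
def martCoeff (F : ℕ → G → ℝ) (k : ℕ) : ℝ :=
  limUnder atTop (fun n => ∫ x, F n x * walsh k x ∂μG)

/-- Partial sums `S_m F` of the Walsh–Fourier series of a martingale. -/
def martSum (F : ℕ → G → ℝ) (m : ℕ) (x : G) : ℝ :=
  ∑ k ∈ Finset.range m, martCoeff F k * walsh k x

/-- The `(C,α)` means of a martingale. -/
def martCesaro (α : ℝ) (F : ℕ → G → ℝ) (n : ℕ) (x : G) : ℝ :=
  (cesA α n)⁻¹ * ∑ k ∈ Finset.Icc 1 n, cesA (α - 1) (n - k) * martSum F k x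

/-- The `L_p(G)` quasi-norm `(∫ |f|^p dμ)^{1/p}`, valued in `ℝ≥0∞`. -/
def LpNormG (p : ℝ) (f : G → ℝ) : ℝ≥0∞ :=
  (∫⁻ x, ENNReal.ofReal |f x| ^ p ∂μG) ^ (1 / p)

/-- The Hardy space quasi-norm `‖F‖_{H_p} = ‖sup_n |F_n|‖_p` of a martingale. -/
def hardyNorm (p : ℝ) (F : ℕ → G → ℝ) : ℝ≥0∞ :=
  (∫⁻ x, (⨆ n, ENNReal.ofReal |F n x|) ^ p ∂μG) ^ (1 / p)

/-- The Hardy quasi-norm of an integrable function, via its generated martingale `(E_n f)`. -/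
def hardyFnNorm (p : ℝ) (f : G → ℝ) : ℝ≥0∞ :=
  hardyNorm p (fun n => μG[f | dyadicF n])


section Aux

lemma testBit_two_pow_add' {n j : ℕ} (hj : j < 2^n) {k : ℕ} (hk : k ≠ n) :
    Nat.testBit (2^n + j) k = Nat.testBit j k := by
  rcases lt_or_gt_of_ne hk with h | h
  · exact Nat.testBit_two_pow_add_gt h j
  · rw [Nat.testBit_lt_two_pow, Nat.testBit_lt_two_pow]
    · exact lt_of_lt_of_le hj (Nat.pow_le_pow_right (by norm_num) h.le)
    · have h2 : 2^n + j < 2^(n+1) := by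
        have : (2:ℕ)^(n+1) = 2^n + 2^n := by ring
        omega
      exact lt_of_lt_of_le h2 (Nat.pow_le_pow_right (by norm_num) h)

lemma walsh_eq_prod {n N : ℕ} (hn : n ≤ N) (x : G) :
    walsh n x = ∏ k ∈ Finset.range N, rad k x ^ (Nat.testBit n k).toNat := by
  unfold walsh
  refine Finset.prod_subset (Finset.range_subset_range.2 hn) ?_
  intro k _ hk
  simp only [Finset.mem_range, not_lt] at hk
  rw [Nat.testBit_lt_two_pow
    (lt_of_lt_of_le (Nat.lt_two_pow_self (n := n)) (Nat.pow_le_pow_right (by norm_num) hk))]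
  simp

lemma walsh_two_pow_add {n j : ℕ} (hj : j < 2^n) (x : G) :
    walsh (2^n + j) x = rad n x * walsh j x := by
  have hN : n < 2^n + j := lt_of_lt_of_le (Nat.lt_two_pow_self (n := n)) (Nat.le_add_right _ _)
  have hmem : n ∈ Finset.range (2^n + j) := Finset.mem_range.2 hN
  rw [walsh_eq_prod (show j ≤ 2^n + j by omega) x]
  unfold walsh
  rw [← Finset.mul_prod_erase _ _ hmem, ← Finset.mul_prod_erase _ _ hmem]
  have h1 : Nat.testBit (2^n + j) n = true := by
    rw [Nat.testBit_two_pow_add_eq, Nat.testBit_lt_two_pow hj]; rfl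
  have h2 : Nat.testBit j n = false := Nat.testBit_lt_two_pow hj
  rw [h1, h2]
  simp only [Bool.toNat_true, Bool.toNat_false, pow_one, pow_zero, one_mul]
  congr 1
  refine Finset.prod_congr rfl fun i hi => ?_
  rw [testBit_two_pow_add' hj (Finset.ne_of_mem_erase hi)]

lemma dirichlet_two_pow_add {n m : ℕ} (hm : m ≤ 2^n) (x : G) :
    dirichlet (2^n + m) x = dirichlet (2^n) x + rad n x * dirichlet m x := by
  unfold dirichlet
  rw [Finset.sum_range_add, Finset.mul_sum]
  congr 1
  refine Finset.sum_congr rfl fun i hi => ?_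
  exact walsh_two_pow_add (lt_of_lt_of_le (Finset.mem_range.1 hi) hm) x

lemma dirichlet_two_pow (n : ℕ) (x : G) :
    dirichlet (2^n) x = ∏ i ∈ Finset.range n, (1 + rad i x) := by
  induction n with
  | zero => simp [dirichlet, walsh]
  | succ n ih =>
      have h : (2:ℕ)^(n+1) = 2^n + 2^n := by ring
      rw [h, dirichlet_two_pow_add le_rfl x, ih, Finset.prod_range_succ]
      ring

lemma fejer_sum_rec (n : ℕ) (x : G) :
    ∑ j ∈ Finset.Icc 1 (2^(n+1)), dirichlet j x
      = (1 + rad n x) * ∑ j ∈ Finset.Icc 1 (2^n), dirichlet j x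
        + 2^n * dirichlet (2^n) x := by
  have key : ∀ m : ℕ, ∑ j ∈ Finset.Icc 1 m, dirichlet j x
      = ∑ i ∈ Finset.range m, dirichlet (1 + i) x := by
    intro m
    rw [← Finset.Ico_add_one_right_eq_Icc, Finset.sum_Ico_eq_sum_range]
    simp
  rw [key, key]
  have h : (2:ℕ)^(n+1) = 2^n + 2^n := by ring
  rw [h, Finset.sum_range_add]
  have h2 : ∀ i ∈ Finset.range (2^n),
      dirichlet (1 + (2^n + i)) x
        = dirichlet (2^n) x + rad n x * dirichlet (1 + i) x := by
    intro i hi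
    have : 1 + (2^n + i) = 2^n + (1 + i) := by ring
    rw [this, dirichlet_two_pow_add (by have := Finset.mem_range.1 hi; omega) x]
  rw [Finset.sum_congr rfl h2, Finset.sum_add_distrib, ← Finset.mul_sum,
    Finset.sum_const, Finset.card_range]
  ring

end Aux
/-- for `x ∈ I_{l+1}(e_k + e_l)` with `k < l`: `|K_{2^A}(x)| ≤ c 2^k` when `A ≤ l`,
and `K_{2^A}(x) = 0` when `A > l`. -/
theorem statement7 :
    ∃ c : ℝ, 0 < c ∧ ∀ k l : ℕ, k < l → ∀ x ∈ dyadicI (l + 1) (eG k + eG l),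
      (∀ A : ℕ, A ≤ l → |fejer (2 ^ A) x| ≤ c * 2 ^ k) ∧
      (∀ A : ℕ, l < A → fejer (2 ^ A) x = 0) := by
  refine ⟨1, one_pos, ?_⟩
  intro k l hkl x hx
  simp only [dyadicI, Set.mem_setOf_eq] at hx
  have hxc : ∀ i ≤ l, x i = if i = k ∨ i = l then 1 else 0 := by
    intro i hi
    rw [hx i (by omega)]
    simp only [Pi.add_apply, eG]
    rcases eq_or_ne i k with rfl | hik
    · simp [Nat.ne_of_lt hkl]
    · rcases eq_or_ne i l with rfl | hil
      · simp [hik]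
      · simp [hik, hil]
  have hv1 : ((1 : ZMod 2)).val = 1 := rfl
  have hv0 : ((0 : ZMod 2)).val = 0 := rfl
  have hrad0 : ∀ i ≤ l, i ≠ k → i ≠ l → rad i x = 1 := by
    intro i hi h1 h2
    rw [rad, hxc i hi, if_neg (by tauto), hv0, pow_zero]
  have hradk : rad k x = -1 := by
    rw [rad, hxc k hkl.le, if_pos (Or.inl rfl), hv1, pow_one]
  have hradl : rad l x = -1 := by
    rw [rad, hxc l le_rfl, if_pos (Or.inr rfl), hv1, pow_one]
  have hD1 : ∀ n ≤ k, dirichlet (2^n) x = 2^n := by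
    intro n hn
    rw [dirichlet_two_pow]
    have h : ∀ i ∈ Finset.range n, (1 + rad i x) = 2 := by
      intro i hi
      have hi' := Finset.mem_range.1 hi
      rw [hrad0 i (by omega) (by omega) (by omega)]
      norm_num
    rw [Finset.prod_congr rfl h, Finset.prod_const, Finset.card_range]
  have hD0 : ∀ n, k < n → dirichlet (2^n) x = 0 := by
    intro n hn
    rw [dirichlet_two_pow]
    apply Finset.prod_eq_zero (Finset.mem_range.2 hn)
    rw [hradk]
    ring
  have key : ∀ n : ℕ, (∑ j ∈ Finset.Icc 1 (2^n), dirichlet j x)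
      = if n ≤ k then ((2:ℝ)^n * 2^n + 2^n)/2 else if n ≤ l then (2:ℝ)^(n+k)/2 else 0 := by
    intro n
    induction n with
    | zero =>
        rw [if_pos (Nat.zero_le k)]
        have h1 : (2:ℕ)^0 = 1 := rfl
        rw [h1, Finset.Icc_self, Finset.sum_singleton]
        have h2 : dirichlet 1 x = 1 := by simp [dirichlet, walsh]
        rw [h2]
        norm_num
    | succ n ih =>
        rw [fejer_sum_rec n x, ih]
        rcases lt_trichotomy n k with h | rfl | h
        · rw [if_pos (by omega : n ≤ k), if_pos (by omega : n + 1 ≤ k),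
            hrad0 n (by omega) (by omega) (by omega), hD1 n (by omega)]
          ring
        · rw [if_pos le_rfl, if_neg (by omega : ¬ n + 1 ≤ n), if_pos (by omega : n + 1 ≤ l),
            hradk, hD1 n le_rfl]
          ring
        · rcases lt_trichotomy n l with h2 | rfl | h2
          · rw [if_neg (by omega), if_pos (by omega : n ≤ l), if_neg (by omega),
              if_pos (by omega : n + 1 ≤ l), hrad0 n (by omega) (by omega) (by omega),
              hD0 n h]
            ring
          · rw [if_neg (by omega), if_pos le_rfl, if_neg (by omega), if_neg (by omega),
              hradl, hD0 n h]
            ring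
          · rw [if_neg (by omega), if_neg (by omega), if_neg (by omega), if_neg (by omega),
              hD0 n h]
            ring
  have hfe : ∀ A : ℕ, fejer (2^A) x
      = ((2:ℝ)^A)⁻¹ * ∑ j ∈ Finset.Icc 1 (2^A), dirichlet j x := by
    intro A
    rw [fejer]
    norm_num
  have h2A : ∀ A : ℕ, (0:ℝ) < 2^A := fun A => pow_pos (by norm_num) A
  constructor
  · intro A hA
    rw [hfe A, key A, one_mul]
    rcases le_or_gt A k with h | h
    · rw [if_pos h]
      have heq : ((2:ℝ)^A)⁻¹ * (((2:ℝ)^A * 2^A + 2^A)/2) = ((2:ℝ)^A + 1)/2 := by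
        field_simp
      rw [heq, abs_of_nonneg (by positivity)]
      have hle : (2:ℝ)^A ≤ 2^k := pow_le_pow_right₀ (by norm_num) h
      have h1 : (1:ℝ) ≤ 2^k := one_le_pow₀ (by norm_num : (1:ℝ) ≤ 2)
      linarith
    · rw [if_neg (by omega), if_pos hA]
      have heq : ((2:ℝ)^A)⁻¹ * ((2:ℝ)^(A+k)/2) = (2:ℝ)^k/2 := by
        rw [pow_add]
        field_simp
      rw [heq, abs_of_nonneg (by positivity)]
      linarith [h2A k]
  · intro A hA
    rw [hfe A, key A, if_neg (by omega), if_neg (by omega), mul_zero]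

end
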